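/- arXiv:2402.03113 — 3 statements merged into one kernel-verified Lean document; each statement's English description precedes it below -/
import Mathlib

section
/- Bias bound for the non-projection/quasi-projection. Let {b_1, …, b_d} be a generating system of the subspace T with Gramian matrix G_{kl} := (b_k, b_l), and let λ_*(G) denote the smallest strictly positive eigenvalue of G. Let x_1, …, x_n be i.i.d. samples from μ and define the estimator P^n g := Σ_{k=1}^d (g, b_k)_n b_k. Then for every g ∈ H, E[(g, P^n g)] ≥ λ_*(G) ‖P g‖², where P is the H-orthogonal projection onto T; equality holds when G is the identity matrix. -/
open MeasureTheory
open scoped RealInnerProductSpace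

lemma spectral_aux {d : ℕ} (G : Matrix (Fin d) (Fin d) ℝ) (hGsym : G.IsHermitian)
    (hPSD : ∀ x : EuclideanSpace ℝ (Fin d), 0 ≤ ⟪x, Matrix.toEuclideanLin G x⟫)
    (lam : ℝ) (hlb : ∀ μ : ℝ, 0 < μ → Module.End.HasEigenvalue (Matrix.toLin' G) μ → lam ≤ μ)
    (y : EuclideanSpace ℝ (Fin d)) :
    lam * ⟪y, Matrix.toEuclideanLin G y⟫ ≤ ⟪Matrix.toEuclideanLin G y, Matrix.toEuclideanLin G y⟫ := by
  classical
  set A := Matrix.toEuclideanLin G with hA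
  set B := hGsym.eigenvectorBasis with hB
  set μ := hGsym.eigenvalues with hμ
  have hAB : ∀ j, A (B j) = μ j • B j := by
    intro j
    ext k
    simpa [hA, Matrix.toEuclideanLin_apply] using congrFun (hGsym.mulVec_eigenvectorBasis j) k
  set t : Fin d → ℝ := fun j => ⟪B j, y⟫ with ht
  have hy : ∑ j, t j • B j = y := B.sum_repr' y
  have hAy : A y = ∑ j, (μ j * t j) • B j := by
    rw [← hy, map_sum]
    refine Finset.sum_congr rfl fun j _ => ?_
    rw [LinearMap.map_smul, hAB j, smul_smul, mul_comm]
  have hμnn : ∀ j, 0 ≤ μ j := by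
    intro j
    have h1 := hPSD (B j)
    rw [hAB j, real_inner_smul_right, real_inner_self_eq_norm_sq,
      B.orthonormal.1 j] at h1
    simpa using h1
  have hlam : ∀ j, 0 < μ j → lam ≤ μ j := by
    intro j hj
    refine hlb (μ j) hj ?_
    have hvne : (⇑(B j) : Fin d → ℝ) ≠ 0 := by
      intro h0
      exact B.orthonormal.ne_zero j (by ext k; exact congrFun h0 k)
    refine Module.End.hasEigenvalue_of_hasEigenvector (x := (⇑(B j) : Fin d → ℝ)) ⟨?_, hvne⟩
    rw [Module.End.mem_eigenspace_iff, Matrix.toLin'_apply]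
    exact hGsym.mulVec_eigenvectorBasis j
  have h1 : ⟪y, A y⟫ = ∑ j, t j * (μ j * t j) := by
    rw [hAy, ← hy]
    simpa using B.orthonormal.inner_sum t (fun j => μ j * t j) Finset.univ
  have h2 : ⟪A y, A y⟫ = ∑ j, (μ j * t j) * (μ j * t j) := by
    rw [hAy]
    simpa using B.orthonormal.inner_sum (fun j => μ j * t j) (fun j => μ j * t j) Finset.univ
  rw [h1, h2, Finset.mul_sum]
  refine Finset.sum_le_sum fun j _ => ?_
  rcases eq_or_lt_of_le (hμnn j) with h | h
  · simp [← h]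
  · have := hlam j h
    have h3 : lam * (t j * (μ j * t j)) = (lam * μ j) * t j ^ 2 := by ring
    have h4 : (μ j * t j) * (μ j * t j) = (μ j * μ j) * t j ^ 2 := by ring
    rw [h3, h4]
    apply mul_le_mul_of_nonneg_right _ (sq_nonneg _)
    exact mul_le_mul_of_nonneg_right this (le_of_lt h)


/-- **Bias bound for the non-projection/quasi-projection** (Lemma B.1).
For a generating system `b₁, …, b_d` of `T` with Gramian `G` and smallest strictly positive
eigenvalue `λ⋆(G)`, and i.i.d. samples `x₁, …, xₙ ∼ μ`, the estimator
`Pⁿ g := ∑ₖ (g, bₖ)ₙ bₖ` satisfies `E[(g, Pⁿ g)] ≥ λ⋆(G) ‖P g‖²` for every `g ∈ H`, where `P`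
is the `H`-orthogonal projection onto `T`; equality holds when `G` is the identity matrix. -/
theorem quasi_projection_bias_bound
    {Ω : Type*} [MeasurableSpace Ω] (ℙ : Measure Ω) [IsProbabilityMeasure ℙ]
    {X : Type*} [MeasurableSpace X] (ρ μm : Measure X)
    [IsProbabilityMeasure ρ] [IsProbabilityMeasure μm]
    (w : X → ℝ) (hw : ∀ x, 0 ≤ w x)
    {H : Type*} [NormedAddCommGroup H] [InnerProductSpace ℝ H]
    (l : ℕ) (Lmap : X → H →ₗ[ℝ] EuclideanSpace ℝ (Fin l))
    -- the inner product of `H` is induced by the family `L_x`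
    (hinner : ∀ u v : H, ⟪u, v⟫ = ∫ x, ⟪Lmap x u, Lmap x v⟫ ∂ρ)
    -- the generating system of `T`
    (d : ℕ) (b : Fin d → H)
    -- `w dμ = dρ` on the support of `T`
    (hwμ : ∀ f : X → ℝ, (∀ x, (∀ k, Lmap x (b k) = 0) → f x = 0) →
      ∫ x, f x ∂ρ = ∫ x, w x * f x ∂μm)
    -- the Gramian matrix and its smallest strictly positive eigenvalue
    (G : Matrix (Fin d) (Fin d) ℝ) (hG : ∀ k l', G k l' = ⟪b k, b l'⟫)
    (lamStar : ℝ)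
    (hlamStar :
      IsLeast {c : ℝ | 0 < c ∧ Module.End.HasEigenvalue (Matrix.toLin' G) c} lamStar)
    -- the i.i.d. samples `x₁, …, xₙ ∼ μ`
    (n : ℕ) (hn : 0 < n)
    (Xs : Fin n → Ω → X)
    (hXmeas : ∀ i, Measurable (Xs i))
    (hXdist : ∀ i, Measure.map (Xs i) ℙ = μm)
    (hXindep : ProbabilityTheory.iIndepFun (m := fun _ => ‹MeasurableSpace X›) Xs ℙ)
    -- `P` is the `H`-orthogonal projection onto `T = span b`
    (P : H →L[ℝ] H)
    (hP_mem : ∀ v, P v ∈ Submodule.span ℝ (Set.range b))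
    (hP_fix : ∀ v ∈ Submodule.span ℝ (Set.range b), P v = v)
    (hP_sym : ∀ u v, ⟪P u, v⟫ = ⟪u, P v⟫) :
    ∀ g : H,
      lamStar * ‖P g‖ ^ 2 ≤
        ∫ ω, ⟪g, ∑ k, ((1 / (n : ℝ)) * ∑ i, w (Xs i ω) *
          ⟪Lmap (Xs i ω) g, Lmap (Xs i ω) (b k)⟫) • b k⟫ ∂ℙ ∧
      (G = 1 →
        ∫ ω, ⟪g, ∑ k, ((1 / (n : ℝ)) * ∑ i, w (Xs i ω) *
          ⟪Lmap (Xs i ω) g, Lmap (Xs i ω) (b k)⟫) • b k⟫ ∂ℙ = ‖P g‖ ^ 2) := by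
  intro g
  classical
  set c : Fin d → ℝ := fun k => ⟪g, b k⟫ with hcdef
  set F : Fin d → X → ℝ := fun k x => w x * ⟪Lmap x g, Lmap x (b k)⟫ with hFdef
  -- Step 1: the μm-integral of F k is c k
  have hFμ : ∀ k, ∫ x, F k x ∂μm = c k := by
    intro k
    have h1 := hwμ (fun x => ⟪Lmap x g, Lmap x (b k)⟫) (fun x hx => by simp [hx k])
    have h2 : c k = ∫ x, (⟪Lmap x g, Lmap x (b k)⟫ : ℝ) ∂ρ := hinner g (b k)
    rw [hFdef]
    rw [← h1, ← h2]
  -- Step 2: rewrite the integrand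
  have hiden : ∀ ω : Ω,
      (⟪g, ∑ k, ((1 / (n : ℝ)) * ∑ i, w (Xs i ω) *
        ⟪Lmap (Xs i ω) g, Lmap (Xs i ω) (b k)⟫) • b k⟫ : ℝ)
      = ∑ k ∈ Finset.univ.filter (fun k => c k ≠ 0),
          ((1 / (n : ℝ)) * ∑ i, F k (Xs i ω)) * c k := by
    intro ω
    have e1 : (⟪g, ∑ k, ((1 / (n : ℝ)) * ∑ i, w (Xs i ω) *
        ⟪Lmap (Xs i ω) g, Lmap (Xs i ω) (b k)⟫) • b k⟫ : ℝ)
        = ∑ k, ((1 / (n : ℝ)) * ∑ i, F k (Xs i ω)) * c k := by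
      rw [inner_sum]
      refine Finset.sum_congr rfl fun k _ => ?_
      rw [real_inner_smul_right]
    rw [e1]
    exact (Finset.sum_filter_of_ne (p := fun k => c k ≠ 0)
      (f := fun k => ((1 / (n : ℝ)) * ∑ i, F k (Xs i ω)) * c k)
      (fun k _ h hc => h (by simp [hc]))).symm
  -- Step 3: integrability and value of each term
  have key : ∀ k, c k ≠ 0 →
      Integrable (fun ω => ((1 / (n : ℝ)) * ∑ i, F k (Xs i ω)) * c k) ℙ ∧
      ∫ ω, ((1 / (n : ℝ)) * ∑ i, F k (Xs i ω)) * c k ∂ℙ = c k ^ 2 := by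
    intro k hk
    have hμint : Integrable (F k) μm := by
      by_contra hni
      exact hk ((hFμ k).symm.trans (integral_undef hni))
    have hcomp : ∀ i : Fin n, Integrable (fun ω => F k (Xs i ω)) ℙ := by
      intro i
      have h1 : Integrable (F k) (Measure.map (Xs i) ℙ) := by rw [hXdist i]; exact hμint
      exact (integrable_map_measure h1.aestronglyMeasurable (hXmeas i).aemeasurable).mp h1
    have hcompint : ∀ i : Fin n, ∫ ω, F k (Xs i ω) ∂ℙ = c k := by
      intro i
      have h1 : Integrable (F k) (Measure.map (Xs i) ℙ) := by rw [hXdist i]; exact hμint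
      have h2 := integral_map (hXmeas i).aemeasurable h1.aestronglyMeasurable
      rw [hXdist i] at h2
      rw [← h2]
      exact hFμ k
    have hsum : Integrable (fun ω => ∑ i, F k (Xs i ω)) ℙ :=
      integrable_finset_sum _ (fun i _ => hcomp i)
    refine ⟨(hsum.const_mul _).mul_const _, ?_⟩
    rw [integral_mul_const, integral_const_mul, integral_finset_sum _ (fun i _ => hcomp i)]
    simp only [hcompint, Finset.sum_const, Finset.card_univ, Fintype.card_fin, nsmul_eq_mul]
    have hn' : (n : ℝ) ≠ 0 := Nat.cast_ne_zero.mpr hn.ne'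
    field_simp
  -- Step 4: value of the full integral
  have hIntegral : (∫ ω, (⟪g, ∑ k, ((1 / (n : ℝ)) * ∑ i, w (Xs i ω) *
        ⟪Lmap (Xs i ω) g, Lmap (Xs i ω) (b k)⟫) • b k⟫ : ℝ) ∂ℙ) = ∑ k, c k ^ 2 := by
    rw [integral_congr_ae (Filter.Eventually.of_forall hiden)]
    rw [integral_finset_sum _ (fun k hk => (key k (Finset.mem_filter.mp hk).2).1)]
    rw [Finset.sum_congr rfl (fun k hk => (key k (Finset.mem_filter.mp hk).2).2)]
    exact Finset.sum_filter_of_ne (p := fun k => c k ≠ 0) (f := fun k => c k ^ 2)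
      (fun k _ h hc => h (by simp [hc]))
  -- Step 5: linear algebra
  obtain ⟨coef, hcoef⟩ := (Submodule.mem_span_range_iff_exists_fun ℝ).mp (hP_mem g)
  have hPb : ∀ k, P (b k) = b k := fun k => hP_fix _ (Submodule.subset_span ⟨k, rfl⟩)
  have hcP : ∀ k, c k = ⟪P g, b k⟫ := by
    intro k
    rw [hP_sym g (b k), hPb k, hcdef]
  have hc_mul : ∀ k, c k = ∑ l', G k l' * coef l' := by
    intro k
    rw [hcP k, ← hcoef, sum_inner]
    refine Finset.sum_congr rfl fun l' _ => ?_
    rw [real_inner_smul_left, hG k l', real_inner_comm (b l') (b k), mul_comm]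
  have hnorm : ‖P g‖ ^ 2 = ∑ k, coef k * c k := by
    rw [← real_inner_self_eq_norm_sq]
    conv_lhs => rw [← hcoef]
    rw [sum_inner]
    refine Finset.sum_congr rfl fun k _ => ?_
    rw [real_inner_smul_left, real_inner_comm, hcoef, ← hcP k]
  have hGsym : G.IsHermitian := by
    ext k l'
    simp [Matrix.conjTranspose_apply, hG, real_inner_comm]
  have hPSD : ∀ x : EuclideanSpace ℝ (Fin d), 0 ≤ ⟪x, Matrix.toEuclideanLin G x⟫ := by
    intro x
    have h1 : ⟪x, Matrix.toEuclideanLin G x⟫ = ∑ k, ∑ l', x k * (x l' * ⟪b k, b l'⟫) := by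
      simp only [PiLp.inner_apply, RCLike.inner_apply, starRingEnd_apply, star_trivial,
        Matrix.toEuclideanLin_apply, PiLp.toLp_apply,
        Matrix.mulVec, dotProduct, hG, Finset.mul_sum, Finset.sum_mul]
      refine Finset.sum_congr rfl fun k _ => Finset.sum_congr rfl fun l' _ => by ring
    have h2 : (⟪∑ k, x k • b k, ∑ l', x l' • b l'⟫ : ℝ)
        = ∑ k, ∑ l', x k * (x l' * ⟪b k, b l'⟫) := by
      rw [sum_inner]
      refine Finset.sum_congr rfl fun k _ => ?_
      rw [real_inner_smul_left, inner_sum, Finset.mul_sum]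
      refine Finset.sum_congr rfl fun l' _ => ?_
      rw [real_inner_smul_right]
    rw [h1, ← h2]
    exact real_inner_self_nonneg
  set yE : EuclideanSpace ℝ (Fin d) := WithLp.toLp 2 coef with hyE
  have hAy : Matrix.toEuclideanLin G yE = (WithLp.toLp 2 c : EuclideanSpace ℝ (Fin d)) := by
    ext k
    simp only [Matrix.toEuclideanLin_apply, PiLp.toLp_apply,
      Matrix.mulVec, dotProduct]
    exact (hc_mul k).symm
  have h3 : ⟪yE, Matrix.toEuclideanLin G yE⟫ = ∑ k, coef k * c k := by
    rw [hAy]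
    simp [PiLp.inner_apply, RCLike.inner_apply, hyE, mul_comm]
  have h4 : ⟪Matrix.toEuclideanLin G yE, Matrix.toEuclideanLin G yE⟫ = ∑ k, c k ^ 2 := by
    rw [hAy]
    simp only [PiLp.inner_apply, RCLike.inner_apply, PiLp.toLp_apply, conj_trivial, sq]
  constructor
  · rw [hIntegral]
    calc lamStar * ‖P g‖ ^ 2 = lamStar * ⟪yE, Matrix.toEuclideanLin G yE⟫ := by rw [hnorm, h3]
      _ ≤ ⟪Matrix.toEuclideanLin G yE, Matrix.toEuclideanLin G yE⟫ :=
          spectral_aux G hGsym hPSD lamStar (fun μ' ha hb => hlamStar.2 ⟨ha, hb⟩) yE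
      _ = ∑ k, c k ^ 2 := h4
  · intro hG1
    rw [hIntegral, hnorm]
    have hcc : ∀ k, c k = coef k := by
      intro k
      rw [hc_mul k, hG1]
      simp [Matrix.one_apply]
    refine Finset.sum_congr rfl fun k _ => ?_
    rw [hcc k, sq]
end

section
/- Strong Polyak–Łojasiewicz inequality along strongly convex unit-speed curves. Let H be a real Hilbert space and L : H → ℝ Fréchet differentiable with gradient ∇L. Let γ : [0, T] → H be a differentiable curve with unit speed, ‖γ'(s)‖ = 1 for s ∈ (0, T). Suppose the composition g := L ∘ γ is λ-strongly convex on [0, T], i.e. g(t) ≥ g(s) + g'(s)(t − s) + (λ/2)(t − s)² for all t ∈ [0, T] and s ∈ (0, T). For s ∈ (0, T), let P_s be the H-orthogonal projection onto any closed subspace of H containing γ'(s). Then for every s ∈ (0, T): ‖P_s ∇L(γ(s))‖² ≥ 2λ (L(γ(s)) − L(γ(T))). -/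
open MeasureTheory
open scoped RealInnerProductSpace

/-- **Strong Polyak–Łojasiewicz inequality along strongly convex unit-speed curves**
(Lemma G.2).  If `γ : [0,T] → H` is a differentiable unit-speed curve such that
`g := 𝓛 ∘ γ` is `λ`-strongly convex on `[0,T]` (with `g'(s) = ⟪∇𝓛(γ s), γ' s⟫` by the chain
rule), and `P s` is the orthogonal projection onto any closed subspace containing `γ' s`,
then `‖P s (∇𝓛(γ s))‖² ≥ 2λ (𝓛(γ s) - 𝓛(γ T))` for every `s ∈ (0,T)`. -/
theorem strong_PL_along_strongly_convex_curve
    {H : Type*} [NormedAddCommGroup H] [InnerProductSpace ℝ H] [CompleteSpace H]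
    (𝓛 : H → ℝ) (grad : H → H)
    (hgrad : ∀ x, HasGradientAt 𝓛 (grad x) x)
    (T lam : ℝ) (hT : 0 < T) (hlam : 0 < lam)
    (γ γ' : ℝ → H)
    -- `γ` is differentiable with derivative `γ'` and unit speed on `(0,T)`
    (hderiv : ∀ s ∈ Set.Ioo 0 T, HasDerivAt γ (γ' s) s)
    (hunit : ∀ s ∈ Set.Ioo 0 T, ‖γ' s‖ = 1)
    -- `g := 𝓛 ∘ γ` is `λ`-strongly convex on `[0,T]`, where by the chain rule
    -- `g'(s) = ⟪∇𝓛(γ s), γ' s⟫`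
    (hconv : ∀ t ∈ Set.Icc 0 T, ∀ s ∈ Set.Ioo 0 T,
      𝓛 (γ t) ≥ 𝓛 (γ s) + ⟪grad (γ s), γ' s⟫ * (t - s) + lam / 2 * (t - s) ^ 2)
    -- `P s` is the orthogonal projection onto a closed subspace containing `γ' s`
    (P : ℝ → H →L[ℝ] H)
    (hP_idem : ∀ s g, P s (P s g) = P s g)
    (hP_sym : ∀ s g h, ⟪P s g, h⟫ = ⟪g, P s h⟫)
    (hP_fix : ∀ s ∈ Set.Ioo 0 T, P s (γ' s) = γ' s) :
    ∀ s ∈ Set.Ioo 0 T,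
      2 * lam * (𝓛 (γ s) - 𝓛 (γ T)) ≤ ‖P s (grad (γ s))‖ ^ 2 := by
  intro s hs
  set a := ⟪grad (γ s), γ' s⟫ with ha
  have hconvT := hconv T ⟨le_of_lt hT, le_refl T⟩ s hs
  -- a = ⟪P s (grad (γ s)), γ' s⟫
  have hswap : a = ⟪P s (grad (γ s)), γ' s⟫ := by
    rw [hP_sym s (grad (γ s)) (γ' s), hP_fix s hs]
  have habs : |a| ≤ ‖P s (grad (γ s))‖ := by
    rw [hswap]
    calc |⟪P s (grad (γ s)), γ' s⟫| ≤ ‖P s (grad (γ s))‖ * ‖γ' s‖ :=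
          abs_real_inner_le_norm _ _
      _ = ‖P s (grad (γ s))‖ := by rw [hunit s hs, mul_one]
  have hsq : a ^ 2 ≤ ‖P s (grad (γ s))‖ ^ 2 := by
    have := sq_abs a
    nlinarith [abs_nonneg a, norm_nonneg (P s (grad (γ s)))]
  nlinarith [sq_nonneg (a + lam * (T - s)), hlam.le]
end

section
/- Tangential gradient dominance near a manifold of positive reach. Let H be a real Hilbert space, u, v ∈ H, set g := v − u, and let P be the H-orthogonal projection onto a closed subspace of H (the tangent space of a manifold M at v). Suppose there are constants 0 < r ≤ R such that ‖g − P g‖ ≤ ‖g‖² / (2R) (the reach inequality at v) and ‖g‖ ≤ r. Then ‖(I − P) g‖ ≤ (r/R) ‖P g‖. -/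
open scoped RealInnerProductSpace

/-- **Tangential gradient dominance near a manifold of positive reach** (Lemma 4.6 /
Appendix I).  If `g := v - u`, `P` is an orthogonal projection (onto the tangent space of a
manifold at `v`), `0 < r ≤ R`, `‖g - P g‖ ≤ ‖g‖²/(2R)` (the reach inequality) and
`‖g‖ ≤ r`, then `‖(I - P) g‖ ≤ (r/R) ‖P g‖`. -/
theorem tangential_gradient_dominance_positive_reach
    {H : Type*} [NormedAddCommGroup H] [InnerProductSpace ℝ H]
    (u v : H) (g : H) (hg : g = v - u)
    -- `P` is an `H`-orthogonal projection
    (P : H →L[ℝ] H)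
    (hP_idem : ∀ x, P (P x) = P x)
    (hP_sym : ∀ x y, ⟪P x, y⟫ = ⟪x, P y⟫)
    (r R : ℝ) (hr : 0 < r) (hrR : r ≤ R)
    -- the reach inequality at `v`
    (hreach : ‖g - P g‖ ≤ ‖g‖ ^ 2 / (2 * R))
    (hgr : ‖g‖ ≤ r) :
    ‖g - P g‖ ≤ r / R * ‖P g‖ := by
  set a := ‖P g‖ with ha
  set b := ‖g - P g‖ with hb
  have hR : 0 < R := lt_of_lt_of_le hr hrR
  have horth : ⟪P g, g - P g⟫ = 0 := by
    rw [inner_sub_right, hP_sym g (P g), hP_idem g, real_inner_comm]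
    ring
  have hpyth : ‖g‖ ^ 2 = a ^ 2 + b ^ 2 := by
    have h := norm_add_sq_real (P g) (g - P g)
    simp only [add_sub_cancel, horth] at h
    linarith
  have ha0 : 0 ≤ a := norm_nonneg _
  have hb0 : 0 ≤ b := norm_nonneg _
  have hag : a ≤ ‖g‖ := by nlinarith [norm_nonneg g]
  have hbg : b ≤ ‖g‖ := by nlinarith [norm_nonneg g]
  have h1 : b * (2 * R) ≤ a ^ 2 + b ^ 2 := by
    have h := hreach
    rw [le_div_iff₀ (by positivity : (0:ℝ) < 2 * R)] at h
    nlinarith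
  have h2 : R * b ≤ a ^ 2 := by nlinarith
  have h3 : a ≤ r := le_trans hag hgr
  rw [div_mul_eq_mul_div, le_div_iff₀ hR]
  nlinarith
end
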